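/- Let Q ∈ ℝ^{k×k} be symmetric positive definite with smallest eigenvalue λ_min(Q) > 0, let Ã ∈ ℝ^{k×k}, let χ, γ, δ > 0, and let ζ, d ∈ ℝᵏ with ‖d‖_∞ ≤ δ. Then 2 ζᵀ (Ã Q⁻¹ − χ I_k) ζ + 2 dᵀ ζ − 2 γ Σ_{j=1}^k ζ_j · sign(ζ_j) ≤ −2 (χ − ‖Ã‖₂ / λ_min(Q)) ‖ζ‖₂² − 2 (γ − δ) ‖ζ‖₁, where sign(0) = 0. In particular, if χ > ‖Ã‖₂ / λ_min(Q) and γ > δ, then the left-hand side is strictly negative for every ζ ≠ 0. -/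

import Mathlib

open Matrix
open scoped Matrix.Norms.L2Operator

private theorem eig_le_aux (k : ℕ) (Q : Matrix (Fin k) (Fin k) ℝ) (hQ : Q.PosDef) (lam : ℝ)
    (hlam : IsLeast {r : ℝ | Module.End.HasEigenvalue (Matrix.mulVecLin Q) r} lam) (i : Fin k) :
    lam ≤ hQ.1.eigenvalues i := by
  apply hlam.2
  refine Module.End.hasEigenvalue_of_hasEigenvector
    (x := (WithLp.equiv 2 _) (hQ.1.eigenvectorBasis i)) ⟨?_, ?_⟩
  · rw [Module.End.mem_eigenspace_iff]
    exact hQ.1.mulVec_eigenvectorBasis i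
  · intro h
    have h0 : hQ.1.eigenvectorBasis i = 0 := (WithLp.equiv 2 _).injective (by simpa using h)
    have := (hQ.1.eigenvectorBasis).orthonormal.1 i
    rw [h0] at this
    simp at this

private theorem quadform_lb_aux (k : ℕ) (Q : Matrix (Fin k) (Fin k) ℝ) (hQ : Q.PosDef) (lam : ℝ)
    (hle : ∀ i, lam ≤ hQ.1.eigenvalues i) (y : Fin k → ℝ) :
    lam * (y ⬝ᵥ y) ≤ y ⬝ᵥ Q *ᵥ y := by
  have hps : (Q - lam • (1 : Matrix (Fin k) (Fin k) ℝ)).PosSemidef := by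
    have hU := hQ.1.spectral_theorem
    simp only [Unitary.conjStarAlgAut_apply] at hU
    set U : Matrix (Fin k) (Fin k) ℝ := (hQ.1.eigenvectorUnitary : Matrix (Fin k) (Fin k) ℝ)
      with hUdef
    have hUU : U * star U = 1 := (Matrix.mem_unitaryGroup_iff).mp hQ.1.eigenvectorUnitary.2
    have h1 : U * (lam • 1) * star U = lam • (1 : Matrix (Fin k) (Fin k) ℝ) := by
      rw [Matrix.mul_smul, mul_one, Matrix.smul_mul, hUU]
    have h2 : diagonal (RCLike.ofReal ∘ hQ.1.eigenvalues) - lam • (1 : Matrix (Fin k) (Fin k) ℝ)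
        = diagonal (fun i => hQ.1.eigenvalues i - lam) := by
      ext i j
      by_cases hij : i = j <;>
        simp [Matrix.diagonal_apply, Matrix.one_apply, hij, Matrix.sub_apply]
    have key : Q - lam • 1 = U * (diagonal (fun i => hQ.1.eigenvalues i - lam)) * star U := by
      rw [← h2, Matrix.mul_sub, Matrix.sub_mul, h1, ← hU]
    rw [key, Matrix.star_eq_conjTranspose]
    exact (Matrix.posSemidef_diagonal_iff.mpr
      fun i => sub_nonneg.mpr (hle i)).mul_mul_conjTranspose_same U
  have h := hps.dotProduct_mulVec_nonneg y
  rw [star_trivial] at h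
  have heq : y ⬝ᵥ (Q - lam • (1 : Matrix (Fin k) (Fin k) ℝ)) *ᵥ y
      = y ⬝ᵥ Q *ᵥ y - lam * (y ⬝ᵥ y) := by
    rw [Matrix.sub_mulVec, dotProduct_sub, Matrix.smul_mulVec, Matrix.one_mulVec,
      dotProduct_smul, smul_eq_mul]
  linarith [heq ▸ h]

private theorem dot_inner_aux (k : ℕ) (a b : Fin k → ℝ) :
    a ⬝ᵥ b = @inner ℝ _ _ ((WithLp.equiv 2 (Fin k → ℝ)).symm a)
      ((WithLp.equiv 2 (Fin k → ℝ)).symm b) := by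
  simp [PiLp.inner_apply, dotProduct, mul_comm]

private theorem opnorm_bound_aux (k : ℕ) (Q : Matrix (Fin k) (Fin k) ℝ) (hQ : Q.PosDef) (lam : ℝ)
    (hlampos : 0 < lam) (hquad : ∀ y : Fin k → ℝ, lam * (y ⬝ᵥ y) ≤ y ⬝ᵥ Q *ᵥ y)
    (Atil : Matrix (Fin k) (Fin k) ℝ) (zeta : Fin k → ℝ) :
    zeta ⬝ᵥ (Atil * Q⁻¹) *ᵥ zeta ≤ (‖Atil‖ / lam) * (zeta ⬝ᵥ zeta) := by
  set w : Fin k → ℝ := Q⁻¹ *ᵥ zeta with hw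
  have hQw : Q *ᵥ w = zeta := by
    rw [hw, Matrix.mulVec_mulVec, Matrix.mul_nonsing_inv _ (isUnit_iff_ne_zero.mpr hQ.det_pos.ne'),
      Matrix.one_mulVec]
  have h1 : zeta ⬝ᵥ (Atil * Q⁻¹) *ᵥ zeta = zeta ⬝ᵥ Atil *ᵥ w := by
    rw [← Matrix.mulVec_mulVec]
  set ez : EuclideanSpace ℝ (Fin k) := (WithLp.equiv 2 (Fin k → ℝ)).symm zeta with hez
  set ew : EuclideanSpace ℝ (Fin k) := (WithLp.equiv 2 (Fin k → ℝ)).symm w with hewd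
  have hnz2 : zeta ⬝ᵥ zeta = ‖ez‖ ^ 2 := by
    rw [dot_inner_aux]; exact real_inner_self_eq_norm_sq _
  have hnw2 : w ⬝ᵥ w = ‖ew‖ ^ 2 := by
    rw [dot_inner_aux]; exact real_inner_self_eq_norm_sq _
  have hcs1 : zeta ⬝ᵥ Atil *ᵥ w ≤ ‖ez‖ * ‖(WithLp.equiv 2 (Fin k → ℝ)).symm (Atil *ᵥ w)‖ := by
    rw [dot_inner_aux]; exact real_inner_le_norm _ _
  have hop : ‖(WithLp.equiv 2 (Fin k → ℝ)).symm (Atil *ᵥ w)‖ ≤ ‖Atil‖ * ‖ew‖ :=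
    Atil.l2_opNorm_mulVec ew
  have hcs2 : w ⬝ᵥ zeta ≤ ‖ew‖ * ‖ez‖ := by
    rw [dot_inner_aux]; exact real_inner_le_norm _ _
  have hq := hquad w
  rw [hQw] at hq
  have hlamw : lam * ‖ew‖ ≤ ‖ez‖ := by
    rcases eq_or_lt_of_le (norm_nonneg ew) with h0 | h0
    · rw [← h0]; simp [norm_nonneg ez]
    · nlinarith [hnw2 ▸ (hq.trans hcs2)]
  have hA : (0:ℝ) ≤ ‖Atil‖ := norm_nonneg _
  rw [h1, hnz2]
  have hkey : ‖ez‖ * ‖(WithLp.equiv 2 (Fin k → ℝ)).symm (Atil *ᵥ w)‖ ≤ ‖ez‖ * (‖Atil‖ * ‖ew‖) :=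
    mul_le_mul_of_nonneg_left hop (norm_nonneg ez)
  have heqc : ‖ez‖ * (‖Atil‖ * ‖ew‖) = (‖Atil‖ / lam) * ‖ez‖ * (lam * ‖ew‖) := by
    field_simp
  have hfin : (‖Atil‖ / lam) * ‖ez‖ * (lam * ‖ew‖) ≤ (‖Atil‖ / lam) * ‖ez‖ * ‖ez‖ :=
    mul_le_mul_of_nonneg_left hlamw (mul_nonneg (div_nonneg hA hlampos.le) (norm_nonneg ez))
  nlinarith [hcs1.trans hkey]

/-- **Lyapunov derivative estimate.** Let `Q` be symmetric positive
definite with smallest eigenvalue `lam > 0`, let `Ã` be arbitrary, `χ, γ, δ > 0` and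
`‖d‖_∞ ≤ δ`.  Then
`2 ζᵀ(ÃQ⁻¹ − χI)ζ + 2 dᵀζ − 2γ Σⱼ ζⱼ sign(ζⱼ) ≤ −2(χ − ‖Ã‖₂/lam)‖ζ‖₂² − 2(γ−δ)‖ζ‖₁`,
and if `χ > ‖Ã‖₂/lam` and `γ > δ`, the left-hand side is strictly negative whenever
`ζ ≠ 0`.  (Here `‖·‖` on matrices is the spectral norm, via `Matrix.L2OpNorm`.) -/
theorem lyapunov_derivative_estimate (k : ℕ)
    (Q : Matrix (Fin k) (Fin k) ℝ) (hQ : Q.PosDef)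
    (lam : ℝ) (hlampos : 0 < lam)
    (hlam : IsLeast {r : ℝ | Module.End.HasEigenvalue (Matrix.mulVecLin Q) r} lam)
    (Atil : Matrix (Fin k) (Fin k) ℝ)
    (chi gam del : ℝ) (hchi : 0 < chi) (hgam : 0 < gam) (hdel : 0 < del)
    (zeta d : Fin k → ℝ) (hd : ∀ j, |d j| ≤ del) :
    (2 * (zeta ⬝ᵥ ((Atil * Q⁻¹ - chi • (1 : Matrix (Fin k) (Fin k) ℝ)).mulVec zeta))
        + 2 * (d ⬝ᵥ zeta) - 2 * gam * ∑ j, zeta j * Real.sign (zeta j)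
      ≤ -2 * (chi - ‖Atil‖ / lam) * (zeta ⬝ᵥ zeta) - 2 * (gam - del) * ∑ j, |zeta j|) ∧
    (chi > ‖Atil‖ / lam → gam > del → zeta ≠ 0 →
      2 * (zeta ⬝ᵥ ((Atil * Q⁻¹ - chi • (1 : Matrix (Fin k) (Fin k) ℝ)).mulVec zeta))
        + 2 * (d ⬝ᵥ zeta) - 2 * gam * ∑ j, zeta j * Real.sign (zeta j) < 0) := by
  have hT : zeta ⬝ᵥ (Atil * Q⁻¹) *ᵥ zeta ≤ (‖Atil‖ / lam) * (zeta ⬝ᵥ zeta) :=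
    opnorm_bound_aux k Q hQ lam hlampos
      (quadform_lb_aux k Q hQ lam (eig_le_aux k Q hQ lam hlam)) Atil zeta
  have hsign : ∀ x : ℝ, x * Real.sign x = |x| := by
    intro x
    rcases lt_trichotomy x 0 with h | h | h
    · rw [Real.sign_of_neg h, abs_of_neg h]; ring
    · simp [h]
    · rw [Real.sign_of_pos h, abs_of_pos h]; ring
  have hsum : ∑ j, zeta j * Real.sign (zeta j) = ∑ j, |zeta j| := by
    exact Finset.sum_congr rfl fun j _ => hsign (zeta j)
  have hdz : d ⬝ᵥ zeta ≤ del * ∑ j, |zeta j| := by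
    rw [Finset.mul_sum]
    refine Finset.sum_le_sum fun j _ => ?_
    calc d j * zeta j ≤ |d j * zeta j| := le_abs_self _
      _ = |d j| * |zeta j| := abs_mul _ _
      _ ≤ del * |zeta j| := mul_le_mul_of_nonneg_right (hd j) (abs_nonneg _)
  have hL : (0:ℝ) ≤ ∑ j, |zeta j| := Finset.sum_nonneg fun j _ => abs_nonneg _
  have hexp : zeta ⬝ᵥ ((Atil * Q⁻¹ - chi • (1 : Matrix (Fin k) (Fin k) ℝ)).mulVec zeta)
      = zeta ⬝ᵥ (Atil * Q⁻¹) *ᵥ zeta - chi * (zeta ⬝ᵥ zeta) := by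
    rw [Matrix.sub_mulVec, dotProduct_sub, Matrix.smul_mulVec, Matrix.one_mulVec,
      dotProduct_smul, smul_eq_mul]
  constructor
  · rw [hexp, hsum]
    nlinarith [hT, hdz]
  · intro h1 h2 h3
    have hSpos : 0 < zeta ⬝ᵥ zeta := by
      obtain ⟨j, hj⟩ := Function.ne_iff.mp h3
      exact Finset.sum_pos' (fun i _ => mul_self_nonneg _)
        ⟨j, Finset.mem_univ j, mul_self_pos.mpr hj⟩
    rw [hexp, hsum]
    nlinarith [hT, hdz]
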